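/- Let β ≥ 0 and let P = (tn, fp, fn, tp) be a two-class classification performance. If (1+β²)·tp + β²·fn + fp ≠ 0, then the F-score F_β(P) = (1+β²)·tp / ((1+β²)·tp + β²·fn + fp) equals R_I(P), where I is the importance with i_tn = 0, i_fp = 1/(1+β²), i_fn = β²/(1+β²), and i_tp = 1; moreover this importance satisfies i_tn + i_tp = i_fp + i_fn and the two scores have the same domain (the denominator of R_I at P is nonzero exactly when (1+β²)·tp + β²·fn + fp ≠ 0). -/

import Mathlib

/-- Ranking score `R_I` of a performance `(tn, fp, fn, tp)` for the importance
`I = (itn, ifp, ifn, itp)`. -/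
noncomputable def RI (itn ifp ifn itp tn fp fn tp : ℝ) : ℝ :=
  (itn * tn + itp * tp) / (itn * tn + ifp * fp + ifn * fn + itp * tp)

/-- Denominator of the ranking score `R_I`. -/
def RIDen (itn ifp ifn itp tn fp fn tp : ℝ) : ℝ :=
  itn * tn + ifp * fp + ifn * fn + itp * tp

/-- All F-scores `F_β` are canonical ranking scores: `F_β = R_I` with
`I = (0, 1/(1+β²), β²/(1+β²), 1)`, this importance is canonical
(`itn + itp = ifp + ifn`), and both scores have the same domain. -/
theorem fBeta_is_canonical_rankingScore
    (β tn fp fn tp : ℝ) (hβ : 0 ≤ β)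
    (htn : 0 ≤ tn) (hfp : 0 ≤ fp) (hfn : 0 ≤ fn) (htp : 0 ≤ tp)
    (hsum : tn + fp + fn + tp = 1)
    (hden : (1 + β ^ 2) * tp + β ^ 2 * fn + fp ≠ 0) :
    (1 + β ^ 2) * tp / ((1 + β ^ 2) * tp + β ^ 2 * fn + fp) =
        RI 0 (1 / (1 + β ^ 2)) (β ^ 2 / (1 + β ^ 2)) 1 tn fp fn tp ∧
      (0 : ℝ) + 1 = 1 / (1 + β ^ 2) + β ^ 2 / (1 + β ^ 2) ∧
      (RIDen 0 (1 / (1 + β ^ 2)) (β ^ 2 / (1 + β ^ 2)) 1 tn fp fn tp ≠ 0 ↔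
        (1 + β ^ 2) * tp + β ^ 2 * fn + fp ≠ 0) := by
  have hb : (1 + β ^ 2) ≠ 0 := by positivity
  have key : RIDen 0 (1 / (1 + β ^ 2)) (β ^ 2 / (1 + β ^ 2)) 1 tn fp fn tp =
      ((1 + β ^ 2) * tp + β ^ 2 * fn + fp) / (1 + β ^ 2) := by
    unfold RIDen; field_simp; ring
  refine ⟨?_, by field_simp; ring, ?_⟩
  · unfold RI
    have hd2 : (0:ℝ) * tn + 1 / (1 + β ^ 2) * fp + β ^ 2 / (1 + β ^ 2) * fn + 1 * tp
        = ((1 + β ^ 2) * tp + β ^ 2 * fn + fp) / (1 + β ^ 2) := by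
      field_simp; ring
    rw [hd2, div_div_eq_mul_div, mul_comm, mul_div_assoc]
    rw [show (0:ℝ) * tn + 1 * tp = tp from by ring]
    rw [mul_div_assoc]
  · rw [key]
    constructor
    · intro h hc; exact h (by rw [hc]; simp)
    · intro h; exact div_ne_zero h hb
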